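/- arXiv:2010.15395 — 2 statements merged into one kernel-verified Lean document; each statement's English description precedes it below -/
import Mathlib

section
/- For any partition η with m' parts fitting in an m' × (n+1−m') rectangle and any integer 0 ≤ k ≤ m', the sum Ψ(η, k) = Σ_{ι ∈ A_k} Π_{j=1}^{k} (t_{u_{ι_j + j − 1}} − t_{ι_j}) equals the factorial elementary symmetric polynomial e_k(x | t) in variables x_1,...,x_{m'} and parameters t_1,...,t_{n+1}, evaluated at the specialization x_i = t_{u_i}, where u_1 < ... < u_{m'} are the up-steps of η enumerated from the bottom of the rectangle. -/
lemma strict_aux {k m : ℕ} (g : Fin k → Fin m)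
    (hg : ∀ a b : Fin k, a < b → g a < g b) :
    ∀ (bv : ℕ) (hb : bv < k) (a : Fin k), (a : ℕ) ≤ bv →
      (g a : ℕ) + bv ≤ (g ⟨bv, hb⟩ : ℕ) + (a : ℕ) := by
  intro bv
  induction bv with
  | zero =>
    intro hb a ha
    have : a = ⟨0, hb⟩ := Fin.ext (by simp only [Fin.val_mk]; omega)
    subst this; simp
  | succ b ih =>
    intro hb a ha
    rcases Nat.lt_or_ge (a : ℕ) (b + 1) with h | h
    · have h1 := ih (by omega) a (by omega)
      have h2 := hg ⟨b, by omega⟩ ⟨b + 1, hb⟩ (by simp [Fin.lt_def])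
      rw [Fin.lt_def] at h2
      omega
    · have : a = ⟨b + 1, hb⟩ := Fin.ext (by simp only [Fin.val_mk]; omega)
      subst this; omega

/- STATEMENT 7: For a partition η with m' parts fitting in an m' × (n+1−m') rectangle and
0 ≤ k ≤ m', the sum Ψ(η,k) = Σ_{ι ∈ A_k} Π_j (t_{u_{ι_j+j−1}} − t_{ι_j}) equals the factorial
elementary symmetric polynomial e_k(x|t) = Σ_{ℓ strictly increasing in [m']} Π_j (x_{ℓ_j} −
t_{ℓ_j−j+1}) specialized at x_i = t_{u_i}, where u_i = η_{m'−i+1} + i is the i-th up-step of η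
from the bottom.  Weakly increasing tuples ι ∈ A_k (entries in [1, m'−k+1]) are encoded as
monotone f : Fin k → Fin (m'−k+1) with ι_j = f j + 1; strictly increasing tuples ℓ as
strictly monotone g : Fin k → Fin m' with ℓ_j = g j + 1 (the 1-based position j is (j:ℕ)+1). -/
theorem Psi_eq_factorial_esymm_specialized (m' n k : ℕ) (hk : k ≤ m') (hmn : m' ≤ n + 1)
    (eta : ℕ → ℕ)
    (hanti : ∀ i, 1 ≤ i → i < m' → eta (i + 1) ≤ eta i)
    (hbd : eta 1 ≤ n + 1 - m')
    (t : ℕ → ℤ) :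
    ∑ f ∈ Finset.univ.filter
        (fun f : Fin k → Fin (m' - k + 1) => ∀ a b : Fin k, a ≤ b → f a ≤ f b),
      ∏ j : Fin k,
        (t (eta (m' - ((f j : ℕ) + 1 + (j : ℕ)) + 1) + ((f j : ℕ) + 1 + (j : ℕ)))
          - t ((f j : ℕ) + 1))
    =
    ∑ g ∈ Finset.univ.filter
        (fun g : Fin k → Fin m' => ∀ a b : Fin k, a < b → g a < g b),
      ∏ j : Fin k,
        (t (eta (m' - ((g j : ℕ) + 1) + 1) + ((g j : ℕ) + 1))
          - t ((g j : ℕ) + 1 - (j : ℕ))) := by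
  apply Finset.sum_bij'
    (i := fun f (_ : f ∈ _) => fun j : Fin k =>
      (⟨(f j : ℕ) + (j : ℕ), by have := (f j).isLt; have := j.isLt; omega⟩ : Fin m'))
    (j := fun g (hg : g ∈ _) => fun j : Fin k =>
      (⟨(g j : ℕ) - (j : ℕ), by
        have hgp := (Finset.mem_filter.mp hg).2
        have h1 := strict_aux g hgp (k - 1) (by have := j.isLt; omega) j (by have := j.isLt; omega)
        have h2 := (g ⟨k - 1, by omega⟩).isLt
        omega⟩ : Fin (m' - k + 1)))
  · intro f hf
    funext j
    apply Fin.ext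
    simp only [Fin.val_mk]
    omega
  · intro g hg
    have hgp := (Finset.mem_filter.mp hg).2
    funext j
    apply Fin.ext
    have hlow := strict_aux g hgp (j : ℕ) j.isLt ⟨0, by have := j.isLt; omega⟩ (by simp)
    simp only [Fin.val_mk, Fin.eta] at hlow ⊢
    omega
  · intro f hf
    apply Finset.prod_congr rfl
    intro j _
    simp only [Fin.val_mk]
    have h1 : (f j : ℕ) + 1 + (j : ℕ) = (f j : ℕ) + (j : ℕ) + 1 := by omega
    have h2 : (f j : ℕ) + (j : ℕ) + 1 - (j : ℕ) = (f j : ℕ) + 1 := by omega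
    rw [h1, h2]
  · intro f hf
    simp only [Finset.mem_filter, Finset.mem_univ, true_and] at hf ⊢
    intro a b hab
    rw [Fin.lt_def] at hab ⊢
    simp only [Fin.val_mk]
    have := hf a b (by rw [Fin.le_def]; omega)
    rw [Fin.le_def] at this
    omega
  · intro g hg
    simp only [Finset.mem_filter, Finset.mem_univ, true_and] at hg ⊢
    intro a b hab
    rw [Fin.le_def] at hab ⊢
    simp only [Fin.val_mk]
    have hlow := strict_aux g hg (a : ℕ) a.isLt ⟨0, by have := a.isLt; omega⟩ (by simp)
    simp only [Fin.val_mk, Fin.eta] at hlow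
    rcases Nat.lt_or_ge (a : ℕ) (b : ℕ) with h | h
    · have := hg a b (by rw [Fin.lt_def]; omega)
      have h2 := strict_aux g hg (b : ℕ) b.isLt a (by omega)
      simp only [Fin.mk_val, Fin.eta] at h2
      have hb2 := (g b).isLt
      rw [Fin.lt_def] at this
      omega
    · have : a = b := Fin.ext (by omega)
      subst this; omega
end

section
/- For any partition η with m' parts and any k with 0 ≤ k ≤ m', the sum Ψ(η, k) = Σ_{ι ∈ A_k} Π_{j=1}^{k} (t_{u_{ι_j+j−1}} − t_{ι_j}), with u_i the up-steps of η from the bottom, is a polynomial in Z_{≥0}[t_2 − t_1, t_3 − t_2, ..., t_N − t_{N−1}]; i.e., each nonzero summand is a product of factors t_a − t_b with a > b, hence a nonnegative integer combination of consecutive differences. -/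
open MvPolynomial

lemma tel_mem (N a b : ℕ) (hb : 1 ≤ b) (hba : b ≤ a) (ha : a ≤ N) :
    (X a - X b : MvPolynomial ℕ ℤ) ∈ Subsemiring.closure
      {p : MvPolynomial ℕ ℤ | ∃ i, 1 ≤ i ∧ i < N ∧ p = X (i + 1) - X i} := by
  induction a with
  | zero => omega
  | succ c ih =>
    rcases eq_or_lt_of_le hba with h | h
    · rw [h, sub_self]; exact zero_mem _
    · have hbc : b ≤ c := by omega
      have heq : (X (c + 1) - X b : MvPolynomial ℕ ℤ)
          = (X (c + 1) - X c) + (X c - X b) := by ring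
      rw [heq]
      exact add_mem (Subsemiring.subset_closure ⟨c, by omega, by omega, rfl⟩)
        (ih hbc (by omega))

theorem Psi_Graham_positive (m' N k : ℕ) (hk : k ≤ m') (eta : ℕ → ℕ)
    (hanti : ∀ i, 1 ≤ i → i < m' → eta (i + 1) ≤ eta i)
    (hN : eta 1 + m' ≤ N) :
    (∑ f ∈ Finset.univ.filter
        (fun f : Fin k → Fin (m' - k + 1) => ∀ a b : Fin k, a ≤ b → f a ≤ f b),
      ∏ j : Fin k,
        ((X (eta (m' - ((f j : ℕ) + 1 + (j : ℕ)) + 1) + ((f j : ℕ) + 1 + (j : ℕ)))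
            : MvPolynomial ℕ ℤ)
          - X ((f j : ℕ) + 1)))
      ∈ Subsemiring.closure
          {p : MvPolynomial ℕ ℤ | ∃ i, 1 ≤ i ∧ i < N ∧ p = X (i + 1) - X i} := by
  have hmono : ∀ i, 1 ≤ i → i ≤ m' → eta i ≤ eta 1 := by
    intro i
    induction i with
    | zero => omega
    | succ c ih =>
      intro _ hc
      rcases Nat.eq_or_lt_of_le (Nat.one_le_iff_ne_zero.mpr (Nat.succ_ne_zero c)) with h | h
      · have hc0 : c = 0 := by omega
        subst hc0; exact le_rfl
      · have hc1 : 1 ≤ c := by omega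
        exact le_trans (hanti c hc1 (by omega)) (ih hc1 (by omega))
  refine Subsemiring.sum_mem _ ?_
  intro f _
  refine Subsemiring.prod_mem _ ?_
  intro j _
  set pos := (f j : ℕ) + 1 + (j : ℕ) with hpos
  have hjk : (j : ℕ) < k := j.isLt
  have hfj : (f j : ℕ) < m' - k + 1 := (f j).isLt
  have hposle : pos ≤ m' := by omega
  have hpos1 : 1 ≤ pos := by omega
  have hidx : 1 ≤ m' - pos + 1 ∧ m' - pos + 1 ≤ m' := by omega
  have heta : eta (m' - pos + 1) ≤ eta 1 := hmono _ hidx.1 hidx.2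
  exact tel_mem N _ _ (by omega) (by omega) (by omega)
end
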